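/- Let d > 1 and let 𝒞′ be a nonempty finite family of d-element subsets of a set V with |𝒞′| < 2d, such that for every F ∈ 𝒞′ and every (d−1)-element subset G of F, there exists F′ ∈ 𝒞′ with F′ ≠ F and G ⊆ F′. Then there is a (d+1)-element set X with 𝒞′ equal to the family of all d-element subsets of X. -/

import Mathlib

open Finset

private lemma aux_cover {V : Type*} [DecidableEq V] (d : ℕ)
    (C : Finset (Finset V))
    (hcard : ∀ F ∈ C, F.card = d)
    (hcover : ∀ F ∈ C, ∀ G ⊆ F, G.card = d - 1 → ∃ F' ∈ C, F' ≠ F ∧ G ⊆ F')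
    {F : Finset V} (hF : F ∈ C) {y : V} (hy : y ∈ F) :
    ∃ H ∈ C, H ∩ F = F.erase y := by
  obtain ⟨H, hH, hne, hsub⟩ := hcover F hF (F.erase y) (erase_subset _ _)
    (by rw [card_erase_of_mem hy, hcard F hF])
  refine ⟨H, hH, ?_⟩
  have hyH : y ∉ H := by
    intro hyH
    apply hne
    have hFH : F ⊆ H := by
      rw [← Finset.insert_erase hy]
      exact insert_subset hyH hsub
    exact (Finset.eq_of_subset_of_card_le hFH
      (by rw [hcard H hH, hcard F hF])).symm
  apply Finset.Subset.antisymm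
  · intro v hv
    rw [mem_inter] at hv
    exact mem_erase.2 ⟨fun h => hyH (h ▸ hv.1), hv.2⟩
  · exact subset_inter hsub (erase_subset _ _)

private lemma aux_deg {V : Type*} [DecidableEq V] (d : ℕ)
    (C : Finset (Finset V))
    (hcard : ∀ F ∈ C, F.card = d)
    (hcover : ∀ F ∈ C, ∀ G ⊆ F, G.card = d - 1 → ∃ F' ∈ C, F' ≠ F ∧ G ⊆ F')
    {F : Finset V} (hF : F ∈ C) :
    d ≤ (C.filter (fun W => (W ∩ F).card = d - 1)).card := by
  classical
  have hch : ∀ y : V, ∃ H : Finset V, y ∈ F → H ∈ C ∧ H ∩ F = F.erase y := by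
    intro y
    by_cases hy : y ∈ F
    · obtain ⟨H, h1, h2⟩ := aux_cover d C hcard hcover hF hy
      exact ⟨H, fun _ => ⟨h1, h2⟩⟩
    · exact ⟨∅, fun h => absurd h hy⟩
  choose g hg using hch
  have key := Finset.card_le_card_of_injOn (s := F)
    (t := C.filter (fun W => (W ∩ F).card = d - 1)) g ?_ ?_
  · rw [hcard F hF] at key; exact key
  · intro y hy
    obtain ⟨h1, h2⟩ := hg y hy
    simp only [mem_coe, mem_filter]
    exact ⟨h1, by rw [h2, card_erase_of_mem hy, hcard F hF]⟩
  · intro y1 h1 y2 h2 he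
    have e1 := (hg y1 h1).2
    have e2 := (hg y2 h2).2
    have : F.erase y1 = F.erase y2 := by rw [← e1, ← e2, he]
    exact (Finset.erase_inj (s := F) h1).mp this

private lemma aux_deg' {V : Type*} [DecidableEq V] (d : ℕ) (hd : 1 ≤ d)
    (C : Finset (Finset V))
    (hcard : ∀ F ∈ C, F.card = d)
    (hcover : ∀ F ∈ C, ∀ G ⊆ F, G.card = d - 1 → ∃ F' ∈ C, F' ≠ F ∧ G ⊆ F')
    {F : Finset V} (hF : F ∈ C) {y₀ : V} (hy₀ : y₀ ∈ F)
    {H₁ H₂ : Finset V} (h1 : H₁ ∈ C) (h2 : H₂ ∈ C) (h12 : H₁ ≠ H₂)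
    (e1 : H₁ ∩ F = F.erase y₀) (e2 : H₂ ∩ F = F.erase y₀) :
    d + 1 ≤ (C.filter (fun W => (W ∩ F).card = d - 1)).card := by
  classical
  set Nf := C.filter (fun W => (W ∩ F).card = d - 1) with hNf
  have hsplit := Finset.card_filter_add_card_filter_not
    (s := Nf) (p := fun W => y₀ ∈ W)
  have hin : d - 1 ≤ (Nf.filter (fun W => y₀ ∈ W)).card := by
    have hch : ∀ y : V, ∃ H : Finset V, y ∈ F → H ∈ C ∧ H ∩ F = F.erase y := by
      intro y
      by_cases hy : y ∈ F
      · obtain ⟨H, hh1, hh2⟩ := aux_cover d C hcard hcover hF hy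
        exact ⟨H, fun _ => ⟨hh1, hh2⟩⟩
      · exact ⟨∅, fun h => absurd h hy⟩
    choose g hg using hch
    have key := Finset.card_le_card_of_injOn (s := F.erase y₀)
      (t := Nf.filter (fun W => y₀ ∈ W)) g ?_ ?_
    · rw [card_erase_of_mem hy₀, hcard F hF] at key; exact key
    · intro y hy
      have hyF : y ∈ F := mem_of_mem_erase hy
      obtain ⟨hg1, hg2⟩ := hg y hyF
      simp only [hNf, mem_coe, mem_filter]
      refine ⟨⟨hg1, by rw [hg2, card_erase_of_mem hyF, hcard F hF]⟩, ?_⟩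
      have : y₀ ∈ F.erase y := mem_erase.2 ⟨fun h => (mem_erase.1 hy).1 h.symm, hy₀⟩
      rw [← hg2] at this
      exact (mem_inter.1 this).1
    · intro y1 hh1 y2 hh2 he
      have ee1 := (hg y1 (mem_of_mem_erase hh1)).2
      have ee2 := (hg y2 (mem_of_mem_erase hh2)).2
      have : F.erase y1 = F.erase y2 := by rw [← ee1, ← ee2, he]
      exact (Finset.erase_inj (s := F) (mem_of_mem_erase hh1)).mp this
  have hout : 2 ≤ (Nf.filter (fun W => ¬ y₀ ∈ W)).card := by
    have hsub : {H₁, H₂} ⊆ Nf.filter (fun W => ¬ y₀ ∈ W) := by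
      intro W hW
      simp only [mem_insert, mem_singleton] at hW
      have hmem : W ∈ C ∧ W ∩ F = F.erase y₀ := by
        rcases hW with rfl | rfl
        · exact ⟨h1, e1⟩
        · exact ⟨h2, e2⟩
      simp only [hNf, mem_filter]
      refine ⟨⟨hmem.1, by rw [hmem.2, card_erase_of_mem hy₀, hcard F hF]⟩, ?_⟩
      intro hy
      have : y₀ ∈ W ∩ F := mem_inter.2 ⟨hy, hy₀⟩
      rw [hmem.2] at this
      exact (mem_erase.1 this).1 rfl
    calc 2 = ({H₁, H₂} : Finset (Finset V)).card := (card_pair h12).symm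
      _ ≤ _ := card_le_card hsub
  omega

theorem stmt2 {V : Type*} [DecidableEq V] (d : ℕ) (hd : 1 < d)
    (C : Finset (Finset V)) (hne : C.Nonempty)
    (hcard : ∀ F ∈ C, F.card = d) (hsize : C.card < 2 * d)
    (hcover : ∀ F ∈ C, ∀ G ⊆ F, G.card = d - 1 → ∃ F' ∈ C, F' ≠ F ∧ G ⊆ F') :
    ∃ X : Finset V, X.card = d + 1 ∧ C = Finset.powersetCard d X := by
  classical
  have hdeg : ∀ F ∈ C, d ≤ (C.filter (fun W => (W ∩ F).card = d - 1)).card :=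
    fun F hF => aux_deg d C hcard hcover hF
  have hself : ∀ F ∈ C, F ∉ C.filter (fun W => (W ∩ F).card = d - 1) := by
    intro F hF h
    have := (mem_filter.1 h).2
    rw [inter_self, hcard F hF] at this
    omega
  -- |C| ≥ d + 1
  have hCbig : d + 1 ≤ C.card := by
    obtain ⟨F, hF⟩ := hne
    have hsub : insert F (C.filter (fun W => (W ∩ F).card = d - 1)) ⊆ C :=
      insert_subset hF (filter_subset _ _)
    have h1 := card_le_card hsub
    rw [card_insert_of_notMem (hself F hF)] at h1
    have := hdeg F hF
    omega
  -- Step 2: any two distinct members intersect in d - 1 elements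
  have hadj : ∀ F ∈ C, ∀ F' ∈ C, F ≠ F' → (F ∩ F').card = d - 1 := by
    intro F hF F' hF' hFF'
    have hle : (F ∩ F').card < d := by
      have hsub : F ∩ F' ⊆ F := inter_subset_left
      have h1 : (F ∩ F').card ≤ d := by
        rw [← hcard F hF]; exact card_le_card hsub
      rcases h1.lt_or_eq with h | h
      · exact h
      · exfalso
        apply hFF'
        have h2 : F ∩ F' = F := Finset.eq_of_subset_of_card_le hsub
          (by rw [hcard F hF, h])
        have h3 : F ⊆ F' := by rw [← h2]; exact inter_subset_right
        exact Finset.eq_of_subset_of_card_le h3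
          (by rw [hcard F hF, hcard F' hF'])
    by_contra hcon
    have hlt : (F ∩ F').card + 2 ≤ d := by omega
    -- F' not a neighbor of F and vice versa
    have hF'nF : F' ∉ C.filter (fun W => (W ∩ F).card = d - 1) := by
      intro h
      have h2 := (mem_filter.1 h).2
      rw [inter_comm] at h2
      omega
    have hFnF' : F ∉ C.filter (fun W => (W ∩ F').card = d - 1) := by
      intro h
      have h2 := (mem_filter.1 h).2
      omega
    -- counting inequality
    have hkey : (C.filter (fun W => (W ∩ F).card = d - 1)).card
        + (C.filter (fun W => (W ∩ F').card = d - 1)).card + 2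
        ≤ C.card + ((C.filter (fun W => (W ∩ F).card = d - 1))
            ∩ (C.filter (fun W => (W ∩ F').card = d - 1))).card := by
      have hb : F' ∉ (C.filter (fun W => (W ∩ F).card = d - 1))
          ∪ (C.filter (fun W => (W ∩ F').card = d - 1)) := by
        rw [mem_union]
        rintro (h | h)
        · exact hF'nF h
        · exact hself F' hF' h
      have ha : F ∉ insert F' ((C.filter (fun W => (W ∩ F).card = d - 1))
          ∪ (C.filter (fun W => (W ∩ F').card = d - 1))) := by
        rw [mem_insert, mem_union]
        rintro (h | h | h)
        · exact hFF' h
        · exact hself F hF h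
        · exact hFnF' h
      have hsub : insert F (insert F' ((C.filter (fun W => (W ∩ F).card = d - 1))
          ∪ (C.filter (fun W => (W ∩ F').card = d - 1)))) ⊆ C := by
        apply insert_subset hF
        apply insert_subset hF'
        exact union_subset (filter_subset _ _) (filter_subset _ _)
      have h1 := card_le_card hsub
      rw [card_insert_of_notMem ha, card_insert_of_notMem hb] at h1
      have h2 := card_union_add_card_inter (C.filter (fun W => (W ∩ F).card = d - 1))
        (C.filter (fun W => (W ∩ F').card = d - 1))
      omega
    have hm3 : 3 ≤ ((C.filter (fun W => (W ∩ F).card = d - 1))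
        ∩ (C.filter (fun W => (W ∩ F').card = d - 1))).card := by
      have d1 := hdeg F hF
      have d2 := hdeg F' hF'
      omega
    -- inclusion-exclusion for middles
    have hIE : ∀ H ∈ (C.filter (fun W => (W ∩ F).card = d - 1))
        ∩ (C.filter (fun W => (W ∩ F').card = d - 1)),
        d ≤ (H ∩ (F ∩ F')).card + 2 := by
      intro H hH
      obtain ⟨hH1, hH2⟩ := mem_inter.1 hH
      have e1 := (mem_filter.1 hH1).2
      have e2 := (mem_filter.1 hH2).2
      have hHC : H ∈ C := (mem_filter.1 hH1).1
      have hu : (H ∩ F) ∪ (H ∩ F') ⊆ H :=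
        union_subset inter_subset_left inter_subset_left
      have hic := card_union_add_card_inter (H ∩ F) (H ∩ F')
      have hr : (H ∩ F) ∩ (H ∩ F') = H ∩ (F ∩ F') := by
        ext v
        simp only [mem_inter]
        tauto
      rw [hr, e1, e2] at hic
      have h3 := card_le_card hu
      rw [hcard H hHC] at h3
      omega
    have hKcard : (F ∩ F').card + 2 = d := by
      obtain ⟨H₀, hH₀⟩ := card_pos.mp
        (by omega : 0 < ((C.filter (fun W => (W ∩ F).card = d - 1))
          ∩ (C.filter (fun W => (W ∩ F').card = d - 1))).card)
      have h1 := hIE H₀ hH₀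
      have h2 := card_le_card (inter_subset_right (s₁ := H₀) (s₂ := F ∩ F'))
      omega
    have hmid : ∀ H ∈ (C.filter (fun W => (W ∩ F).card = d - 1))
        ∩ (C.filter (fun W => (W ∩ F').card = d - 1)), F ∩ F' ⊆ H := by
      intro H hH
      have h1 := hIE H hH
      have h2 : H ∩ (F ∩ F') ⊆ F ∩ F' := inter_subset_right
      have h3 := card_le_card h2
      have h4 : H ∩ (F ∩ F') = F ∩ F' :=
        Finset.eq_of_subset_of_card_le h2 (by omega)
      rw [← h4]
      exact inter_subset_left
    -- boosting lemma: applied symmetrically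
    have hboost : ∀ P Q : Finset V, P ∈ C → Q ∈ C →
        (P ∩ Q).card + 2 = d →
        (∀ H ∈ (C.filter (fun W => (W ∩ P).card = d - 1))
          ∩ (C.filter (fun W => (W ∩ Q).card = d - 1)), P ∩ Q ⊆ H) →
        3 ≤ ((C.filter (fun W => (W ∩ P).card = d - 1))
          ∩ (C.filter (fun W => (W ∩ Q).card = d - 1))).card →
        d + 1 ≤ (C.filter (fun W => (W ∩ P).card = d - 1)).card := by
      intro P Q hP hQ hPQ hsubm hm
      have hScard : (P \ Q).card = 2 := by
        have h1 := card_sdiff_add_card_inter P Q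
        rw [hcard P hP] at h1
        omega
      obtain ⟨a, b, hab, hS⟩ := card_eq_two.mp hScard
      have hrem : ∀ H ∈ (C.filter (fun W => (W ∩ P).card = d - 1))
          ∩ (C.filter (fun W => (W ∩ Q).card = d - 1)),
          P \ H = {a} ∨ P \ H = {b} := by
        intro H hH
        obtain ⟨hH1, hH2⟩ := mem_inter.1 hH
        have e1 := (mem_filter.1 hH1).2
        have hsd : (P \ H).card = 1 := by
          have h1 := card_sdiff_add_card_inter P H
          rw [hcard P hP, inter_comm] at h1
          omega
        have hsub2 : P \ H ⊆ {a, b} := by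
          rw [← hS]
          intro v hv
          obtain ⟨hvP, hvH⟩ := mem_sdiff.1 hv
          rw [mem_sdiff]
          exact ⟨hvP, fun hvQ => hvH (hsubm H hH (mem_inter.2 ⟨hvP, hvQ⟩))⟩
        obtain ⟨x, hx⟩ := card_eq_one.mp hsd
        have hxmem : x ∈ ({a, b} : Finset V) := hsub2 (by rw [hx]; exact mem_singleton_self x)
        rw [mem_insert, mem_singleton] at hxmem
        rcases hxmem with rfl | rfl
        · exact Or.inl hx
        · exact Or.inr hx
      have hfin : ∀ y₀ ∈ P, 2 ≤ (((C.filter (fun W => (W ∩ P).card = d - 1))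
            ∩ (C.filter (fun W => (W ∩ Q).card = d - 1))).filter
              (fun H => P \ H = {y₀})).card →
          d + 1 ≤ (C.filter (fun W => (W ∩ P).card = d - 1)).card := by
        intro y₀ hy₀ h2'
        obtain ⟨H₁, hh1, H₂, hh2, h12⟩ := one_lt_card.mp (by omega : 1 <
          (((C.filter (fun W => (W ∩ P).card = d - 1))
            ∩ (C.filter (fun W => (W ∩ Q).card = d - 1))).filter
              (fun H => P \ H = {y₀})).card)
        have p1 := mem_filter.1 hh1
        have p2 := mem_filter.1 hh2
        have c1 : H₁ ∈ C := (mem_filter.1 (mem_inter.1 p1.1).1).1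
        have c2 : H₂ ∈ C := (mem_filter.1 (mem_inter.1 p2.1).1).1
        have eH : ∀ H : Finset V, P \ H = {y₀} → H ∩ P = P.erase y₀ := by
          intro H hPH
          have hss : P \ (P \ H) = P ∩ H := sdiff_sdiff_right_self
          rw [hPH] at hss
          rw [inter_comm, ← hss, erase_eq]
        exact aux_deg' d (by omega) C hcard hcover hP hy₀ c1 c2 h12
          (eH H₁ p1.2) (eH H₂ p2.2)
      have haP : a ∈ P := by
        have : a ∈ P \ Q := by rw [hS]; exact mem_insert_self _ _
        exact (mem_sdiff.1 this).1
      have hbP : b ∈ P := by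
        have : b ∈ P \ Q := by rw [hS]; exact mem_insert_of_mem (mem_singleton_self b)
        exact (mem_sdiff.1 this).1
      have hsplitM := card_filter_add_card_filter_not
        (s := (C.filter (fun W => (W ∩ P).card = d - 1))
          ∩ (C.filter (fun W => (W ∩ Q).card = d - 1)))
        (p := fun H => P \ H = {a})
      have hMb : ((C.filter (fun W => (W ∩ P).card = d - 1))
            ∩ (C.filter (fun W => (W ∩ Q).card = d - 1))).filter
              (fun H => ¬ P \ H = {a}) ⊆
          ((C.filter (fun W => (W ∩ P).card = d - 1))
            ∩ (C.filter (fun W => (W ∩ Q).card = d - 1))).filter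
              (fun H => P \ H = {b}) := by
        intro H hH
        obtain ⟨hh1, hh2⟩ := mem_filter.1 hH
        exact mem_filter.2 ⟨hh1, (hrem H hh1).resolve_left hh2⟩
      have hMbc := card_le_card hMb
      rcases (by omega : 2 ≤ (((C.filter (fun W => (W ∩ P).card = d - 1))
            ∩ (C.filter (fun W => (W ∩ Q).card = d - 1))).filter
              (fun H => P \ H = {a})).card ∨
          2 ≤ (((C.filter (fun W => (W ∩ P).card = d - 1))
            ∩ (C.filter (fun W => (W ∩ Q).card = d - 1))).filter
              (fun H => P \ H = {b})).card) with h | h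
      · exact hfin a haP h
      · exact hfin b hbP h
    have hA := hboost F F' hF hF' hKcard hmid hm3
    have hKcard' : (F' ∩ F).card + 2 = d := by rw [inter_comm]; exact hKcard
    have hmid' : ∀ H ∈ (C.filter (fun W => (W ∩ F').card = d - 1))
        ∩ (C.filter (fun W => (W ∩ F).card = d - 1)), F' ∩ F ⊆ H := by
      intro H hH
      rw [inter_comm] at hH ⊢
      exact hmid H hH
    have hm3' : 3 ≤ ((C.filter (fun W => (W ∩ F').card = d - 1))
        ∩ (C.filter (fun W => (W ∩ F).card = d - 1))).card := by
      rw [inter_comm]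
      exact hm3
    have hB := hboost F' F hF' hF hKcard' hmid' hm3'
    -- at most 4 middles
    have hm4 : ((C.filter (fun W => (W ∩ F).card = d - 1))
        ∩ (C.filter (fun W => (W ∩ F').card = d - 1))).card ≤ 4 := by
      have hScard : (F \ F').card = 2 := by
        have h1 := card_sdiff_add_card_inter F F'
        rw [hcard F hF] at h1
        omega
      have hTcard : (F' \ F).card = 2 := by
        have h1 := card_sdiff_add_card_inter F' F
        rw [hcard F' hF', inter_comm] at h1
        omega
      have hsub : (C.filter (fun W => (W ∩ F).card = d - 1))
          ∩ (C.filter (fun W => (W ∩ F').card = d - 1)) ⊆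
          ((F \ F') ×ˢ (F' \ F)).image
            (fun p => insert p.1 (insert p.2 (F ∩ F'))) := by
        intro H hH
        obtain ⟨hH1, hH2⟩ := mem_inter.1 hH
        have e1 := (mem_filter.1 hH1).2
        have e2 := (mem_filter.1 hH2).2
        have hHC : H ∈ C := (mem_filter.1 hH1).1
        have hK : F ∩ F' ⊆ H := hmid H hH
        have hs1 : (H ∩ (F \ F')).card = 1 := by
          have hpart := card_sdiff_add_card_inter (H ∩ F) F'
          have hr1 : (H ∩ F) \ F' = H ∩ (F \ F') := by
            ext v
            simp only [mem_sdiff, mem_inter]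
            tauto
          have hr2 : (H ∩ F) ∩ F' = F ∩ F' := by
            apply Finset.Subset.antisymm
            · intro v hv
              simp only [mem_inter] at hv ⊢
              exact ⟨hv.1.2, hv.2⟩
            · intro v hv
              simp only [mem_inter] at hv ⊢
              exact ⟨⟨hK (mem_inter.2 hv), hv.1⟩, hv.2⟩
          rw [hr1, hr2, e1] at hpart
          omega
        have hs2 : (H ∩ (F' \ F)).card = 1 := by
          have hpart := card_sdiff_add_card_inter (H ∩ F') F
          have hr1 : (H ∩ F') \ F = H ∩ (F' \ F) := by
            ext v
            simp only [mem_sdiff, mem_inter]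
            tauto
          have hr2 : (H ∩ F') ∩ F = F ∩ F' := by
            apply Finset.Subset.antisymm
            · intro v hv
              simp only [mem_inter] at hv ⊢
              exact ⟨hv.2, hv.1.2⟩
            · intro v hv
              simp only [mem_inter] at hv ⊢
              exact ⟨⟨hK (mem_inter.2 hv), hv.2⟩, hv.1⟩
          rw [hr1, hr2, e2] at hpart
          omega
        obtain ⟨s, hs⟩ := card_eq_one.mp hs1
        obtain ⟨t, ht⟩ := card_eq_one.mp hs2
        have hsmem : s ∈ H ∩ (F \ F') := by rw [hs]; exact mem_singleton_self s
        have htmem : t ∈ H ∩ (F' \ F) := by rw [ht]; exact mem_singleton_self t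
        have hsH : s ∈ H := (mem_inter.1 hsmem).1
        have hsS : s ∈ F \ F' := (mem_inter.1 hsmem).2
        have htH : t ∈ H := (mem_inter.1 htmem).1
        have htT : t ∈ F' \ F := (mem_inter.1 htmem).2
        have hsnotQ : s ∉ F' := (mem_sdiff.1 hsS).2
        have htinF' : t ∈ F' := (mem_sdiff.1 htT).1
        have htnotF : t ∉ F := (mem_sdiff.1 htT).2
        have hsK : s ∉ insert t (F ∩ F') := by
          rw [mem_insert]
          rintro (rfl | h)
          · exact hsnotQ htinF'
          · exact hsnotQ (mem_inter.1 h).2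
        have htK : t ∉ F ∩ F' := fun h => htnotF (mem_inter.1 h).1
        have hsubH : insert s (insert t (F ∩ F')) ⊆ H :=
          insert_subset hsH (insert_subset htH hK)
        have hcardins : (insert s (insert t (F ∩ F'))).card = d := by
          rw [card_insert_of_notMem hsK, card_insert_of_notMem htK]
          omega
        have hHeq : insert s (insert t (F ∩ F')) = H :=
          Finset.eq_of_subset_of_card_le hsubH
            (by rw [hcard H hHC, hcardins])
        rw [mem_image]
        exact ⟨(s, t), mem_product.2 ⟨hsS, htT⟩, hHeq⟩
      calc ((C.filter (fun W => (W ∩ F).card = d - 1))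
          ∩ (C.filter (fun W => (W ∩ F').card = d - 1))).card
          ≤ (((F \ F') ×ˢ (F' \ F)).image
            (fun p => insert p.1 (insert p.2 (F ∩ F')))).card := card_le_card hsub
        _ ≤ ((F \ F') ×ˢ (F' \ F)).card := card_image_le
        _ = 4 := by rw [card_product, hScard, hTcard]
    omega
  -- Step 3-5
  obtain ⟨F, hF, F', hF', hFF'⟩ := one_lt_card.mp (by omega : 1 < C.card)
  have hX : (F ∪ F').card = d + 1 := by
    have h1 := card_union_add_card_inter F F'
    rw [hadj F hF F' hF' hFF', hcard F hF, hcard F' hF'] at h1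
    omega
  by_cases hall : ∀ H ∈ C, H ⊆ F ∪ F'
  · refine ⟨F ∪ F', hX, ?_⟩
    apply Finset.eq_of_subset_of_card_le
    · intro H hH
      rw [mem_powersetCard]
      exact ⟨hall H hH, hcard H hH⟩
    · rw [card_powersetCard, hX, Nat.choose_succ_self_right]
      exact hCbig
  · exfalso
    push_neg at hall
    obtain ⟨F'', hF''C, hF''X⟩ := hall
    have hne1 : F'' ≠ F := by rintro rfl; exact hF''X subset_union_left
    have hne2 : F'' ≠ F' := by rintro rfl; exact hF''X subset_union_right
    have e1 : (F'' ∩ F).card = d - 1 := hadj F'' hF''C F hF hne1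
    have e2 : (F'' ∩ F').card = d - 1 := hadj F'' hF''C F' hF' hne2
    have hXc : (F'' ∩ (F ∪ F')).card ≤ d - 1 := by
      have hss : F'' ∩ (F ∪ F') ⊂ F'' := by
        refine _root_.ssubset_iff_subset_ne.2 ⟨inter_subset_left, fun h => hF''X ?_⟩
        rw [← h]
        exact inter_subset_right
      have h1 := card_lt_card hss
      rw [hcard F'' hF''C] at h1
      omega
    have q1 : F'' ∩ F = F'' ∩ (F ∪ F') := by
      apply Finset.eq_of_subset_of_card_le
      · exact inter_subset_inter (Finset.Subset.refl _) subset_union_left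
      · rw [e1]; exact hXc
    have q2 : F'' ∩ F' = F'' ∩ (F ∪ F') := by
      apply Finset.eq_of_subset_of_card_le
      · exact inter_subset_inter (Finset.Subset.refl _) subset_union_right
      · rw [e2]; exact hXc
    have hq : F'' ∩ F' = F'' ∩ F := q2.trans q1.symm
    have hKeq : F'' ∩ F = F ∩ F' := by
      apply Finset.eq_of_subset_of_card_le
      · intro v hv
        have hvb : v ∈ F'' ∩ F' := by rw [hq]; exact hv
        exact mem_inter.2 ⟨(mem_inter.1 hv).2, (mem_inter.1 hvb).2⟩
      · rw [hadj F hF F' hF' hFF', e1]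
    have hKF' : F'' ∩ F' = F ∩ F' := hq.trans hKeq
    -- extract α, β, γ
    have hαc : (F \ F'').card = 1 := by
      have h1 := card_sdiff_add_card_inter F F''
      rw [hcard F hF, inter_comm, e1] at h1
      omega
    have hβc : (F' \ F'').card = 1 := by
      have h1 := card_sdiff_add_card_inter F' F''
      rw [hcard F' hF', inter_comm, e2] at h1
      omega
    have hγc : (F'' \ F).card = 1 := by
      have h1 := card_sdiff_add_card_inter F'' F
      rw [hcard F'' hF''C, e1] at h1
      omega
    obtain ⟨α, hαe⟩ := card_eq_one.mp hαc
    obtain ⟨β, hβe⟩ := card_eq_one.mp hβc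
    obtain ⟨γ, hγe⟩ := card_eq_one.mp hγc
    have hαm : α ∈ F \ F'' := by rw [hαe]; exact mem_singleton_self α
    have hβm : β ∈ F' \ F'' := by rw [hβe]; exact mem_singleton_self β
    have hγm : γ ∈ F'' \ F := by rw [hγe]; exact mem_singleton_self γ
    have hαF : α ∈ F := (mem_sdiff.1 hαm).1
    have hαnF'' : α ∉ F'' := (mem_sdiff.1 hαm).2
    have hβF' : β ∈ F' := (mem_sdiff.1 hβm).1
    have hβnF'' : β ∉ F'' := (mem_sdiff.1 hβm).2
    have hγF'' : γ ∈ F'' := (mem_sdiff.1 hγm).1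
    have hγnF : γ ∉ F := (mem_sdiff.1 hγm).2
    have hαnF' : α ∉ F' := by
      intro h
      apply hαnF''
      have : α ∈ F ∩ F' := mem_inter.2 ⟨hαF, h⟩
      rw [← hKeq] at this
      exact (mem_inter.1 this).1
    have hβnF : β ∉ F := by
      intro h
      apply hβnF''
      have : β ∈ F ∩ F' := mem_inter.2 ⟨h, hβF'⟩
      rw [← hKeq] at this
      exact (mem_inter.1 this).1
    have hγnF' : γ ∉ F' := by
      intro h
      apply hγnF
      have : γ ∈ F'' ∩ F' := mem_inter.2 ⟨hγF'', h⟩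
      rw [hKF'] at this
      exact (mem_inter.1 this).1
    -- pick k in the core
    have hKpos : 0 < (F ∩ F').card := by
      rw [hadj F hF F' hF' hFF']
      omega
    obtain ⟨k, hk⟩ := card_pos.mp hKpos
    have hkF : k ∈ F := (mem_inter.1 hk).1
    have hkF' : k ∈ F' := (mem_inter.1 hk).2
    have hkF'' : k ∈ F'' := by
      have : k ∈ F'' ∩ F := by rw [hKeq]; exact hk
      exact (mem_inter.1 this).1
    obtain ⟨H, hHC, hHF⟩ := aux_cover d C hcard hcover hF hkF
    have hkH : k ∉ H := by
      intro h
      have : k ∈ H ∩ F := mem_inter.2 ⟨h, hkF⟩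
      rw [hHF] at this
      exact (mem_erase.1 this).1 rfl
    have hαH : α ∈ H := by
      have h1 : α ∈ F.erase k := mem_erase.2 ⟨fun h => hαnF' (h ▸ hkF'), hαF⟩
      rw [← hHF] at h1
      exact (mem_inter.1 h1).1
    have hHneF' : H ≠ F' := fun h => hkH (h ▸ hkF')
    have hHneF'' : H ≠ F'' := fun h => hkH (h ▸ hkF'')
    have hβH : β ∈ H := by
      have eb := hadj F' hF' H hHC (fun h => hHneF' h.symm)
      have hsd : (F' \ H).card = 1 := by
        have h1 := card_sdiff_add_card_inter F' H
        rw [hcard F' hF', eb] at h1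
        omega
      obtain ⟨x, hx⟩ := card_eq_one.mp hsd
      have hkmem : k ∈ F' \ H := mem_sdiff.2 ⟨hkF', hkH⟩
      rw [hx, mem_singleton] at hkmem
      by_contra hβnH
      have hβmem : β ∈ F' \ H := mem_sdiff.2 ⟨hβF', hβnH⟩
      rw [hx, mem_singleton] at hβmem
      exact hβnF (hβmem.trans hkmem.symm ▸ hkF)
    have hγH : γ ∈ H := by
      have eg := hadj F'' hF''C H hHC (fun h => hHneF'' h.symm)
      have hsd : (F'' \ H).card = 1 := by
        have h1 := card_sdiff_add_card_inter F'' H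
        rw [hcard F'' hF''C, eg] at h1
        omega
      obtain ⟨x, hx⟩ := card_eq_one.mp hsd
      have hkmem : k ∈ F'' \ H := mem_sdiff.2 ⟨hkF'', hkH⟩
      rw [hx, mem_singleton] at hkmem
      by_contra hγnH
      have hγmem : γ ∈ F'' \ H := mem_sdiff.2 ⟨hγF'', hγnH⟩
      rw [hx, mem_singleton] at hγmem
      exact hγnF (hγmem.trans hkmem.symm ▸ hkF)
    have hKk : (F ∩ F').erase k ⊆ H := by
      intro v hv
      have hvF : v ∈ F.erase k :=
        mem_erase.2 ⟨(mem_erase.1 hv).1, (mem_inter.1 (mem_of_mem_erase hv)).1⟩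
      rw [← hHF] at hvF
      exact (mem_inter.1 hvF).1
    have hγni : γ ∉ (F ∩ F').erase k := fun h =>
      hγnF (mem_inter.1 (mem_of_mem_erase h)).1
    have hβni : β ∉ insert γ ((F ∩ F').erase k) := by
      rw [mem_insert]
      rintro (rfl | h)
      · exact hβnF'' hγF''
      · exact hβnF (mem_inter.1 (mem_of_mem_erase h)).1
    have hαni : α ∉ insert β (insert γ ((F ∩ F').erase k)) := by
      rw [mem_insert, mem_insert]
      rintro (rfl | rfl | h)
      · exact hαnF' hβF'
      · exact hγnF hαF
      · exact hαnF' (mem_inter.1 (mem_of_mem_erase h)).2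
    have hW : insert α (insert β (insert γ ((F ∩ F').erase k))) ⊆ H :=
      insert_subset hαH (insert_subset hβH (insert_subset hγH hKk))
    have hWcard : (insert α (insert β (insert γ ((F ∩ F').erase k)))).card = d + 1 := by
      rw [card_insert_of_notMem hαni, card_insert_of_notMem hβni,
        card_insert_of_notMem hγni, card_erase_of_mem hk,
        hadj F hF F' hF' hFF']
      omega
    have hfin := card_le_card hW
    rw [hWcard, hcard H hHC] at hfin
    omega
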